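/- arXiv:1902.08923 — 3 statements merged into one kernel-verified Lean document; each statement's English description precedes it below -/
import Mathlib

section
/- If M is a maximal ideal of B₁(X), then Z_B[M] = {Z(f) : f ∈ M} is a Z_B-ultrafilter on X. -/
open Filter Topology

/-- A function `f : X → ℝ` is Baire one if it is a pointwise limit of a
sequence of continuous functions. -/
def IsBaireOne {X : Type*} [TopologicalSpace X] (f : X → ℝ) : Prop :=
  ∃ F : ℕ → C(X, ℝ), ∀ x, Tendsto (fun n => F n x) atTop (𝓝 (f x))

/-- The ring `B₁(X)` of real valued Baire one functions on `X`, as a subring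
of the ring of all functions `X → ℝ`. -/
def B1 (X : Type*) [TopologicalSpace X] : Subring (X → ℝ) where
  carrier := {f | IsBaireOne f}
  zero_mem' := ⟨fun _ => 0, fun x => by simpa using tendsto_const_nhds⟩
  one_mem' := ⟨fun _ => 1, fun x => by simpa using tendsto_const_nhds⟩
  add_mem' := by
    rintro f g ⟨F, hF⟩ ⟨G, hG⟩
    exact ⟨fun n => F n + G n, fun x => by simpa using (hF x).add (hG x)⟩
  mul_mem' := by
    rintro f g ⟨F, hF⟩ ⟨G, hG⟩
    exact ⟨fun n => F n * G n, fun x => by simpa using (hF x).mul (hG x)⟩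
  neg_mem' := by
    rintro f ⟨F, hF⟩
    exact ⟨fun n => -F n, fun x => by simpa using (hF x).neg⟩

variable {X : Type*} [TopologicalSpace X]

/-- The constant function with value `r`, as an element of `B₁(X)`. -/
def bconst (X : Type*) [TopologicalSpace X] (r : ℝ) : B1 X :=
  ⟨fun _ => r, ⟨fun _ => ContinuousMap.const X r, fun x => by simpa using tendsto_const_nhds⟩⟩

theorem babs_mem (f : B1 X) : (fun x => |(f : X → ℝ) x|) ∈ B1 X := by
  obtain ⟨F, hF⟩ := f.2
  exact ⟨fun n => ⟨fun x => |F n x|, (F n).continuous.abs⟩, fun x => (hF x).abs⟩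

/-- The absolute value `|f|` of a Baire one function. -/
def babs (f : B1 X) : B1 X := ⟨fun x => |(f : X → ℝ) x|, babs_mem f⟩

/-- The zero set `Z(f)` of `f ∈ B₁(X)`. -/
def zset (f : B1 X) : Set X := {x | (f : X → ℝ) x = 0}

/-- `Z(B₁(X))`, the family of all zero sets of Baire one functions on `X`. -/
def zsets (X : Type*) [TopologicalSpace X] : Set (Set X) := {Z | ∃ f : B1 X, zset f = Z}

/-- `Z_B[I] = {Z(f) : f ∈ I}` for an ideal `I` of `B₁(X)`. -/
def zbi (I : Ideal (B1 X)) : Set (Set X) := {Z | ∃ f ∈ I, zset f = Z}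

/-- A `Z_B`-filter on `X`: a nonempty family of zero sets of Baire one functions,
not containing `∅`, closed under finite intersections and upward closed in `Z(B₁(X))`. -/
def IsZBFilter (F : Set (Set X)) : Prop :=
  F.Nonempty ∧ F ⊆ zsets X ∧ ∅ ∉ F ∧
    (∀ Z₁ ∈ F, ∀ Z₂ ∈ F, Z₁ ∩ Z₂ ∈ F) ∧
    (∀ Z ∈ F, ∀ Z' ∈ zsets X, Z ⊆ Z' → Z' ∈ F)

/-- A `Z_B`-ultrafilter on `X`: a maximal `Z_B`-filter. -/
def IsZBUltrafilter (U : Set (Set X)) : Prop :=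
  IsZBFilter U ∧ ∀ F : Set (Set X), IsZBFilter F → U ⊆ F → F = U

/-- The finite intersection property: every nonempty finite subfamily has
nonempty intersection. -/
def FIP {X : Type*} (B : Set (Set X)) : Prop :=
  ∀ S : Finset (Set X), ↑S ⊆ B → S.Nonempty → (⋂₀ (S : Set (Set X))).Nonempty

/-- An ideal `I` of `B₁(X)` is a `Z_B`-ideal if `Z_B⁻¹[Z_B[I]] = I`. -/
def IsZBIdeal (I : Ideal (B1 X)) : Prop :=
  ∀ f : B1 X, zset f ∈ zbi I → f ∈ I

/-- An ideal of `B₁(X)` is fixed if the zero sets of its members have a common point. -/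
def FixedIdeal (I : Ideal (B1 X)) : Prop :=
  (⋂ f ∈ (I : Set (B1 X)), zset f).Nonempty

/-- A prime `Z_B`-filter. -/
def IsPrimeZBFilter (F : Set (Set X)) : Prop :=
  IsZBFilter F ∧ ∀ Z₁ ∈ zsets X, ∀ Z₂ ∈ zsets X, Z₁ ∪ Z₂ ∈ F → Z₁ ∈ F ∨ Z₂ ∈ F

/-- `M(f) ≥ 0` in the quotient `B₁(X)/M`: the coset contains a nonnegative function. -/
def QNonneg (M : Ideal (B1 X)) (a : B1 X ⧸ M) : Prop :=
  ∃ g : B1 X, (∀ x, 0 ≤ (g : X → ℝ) x) ∧ Ideal.Quotient.mk M g = a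

/-- `M(f) > 0` in the quotient `B₁(X)/M`. -/
def QPos (M : Ideal (B1 X)) (a : B1 X ⧸ M) : Prop := QNonneg M a ∧ a ≠ 0

/-- A maximal ideal `M` of `B₁(X)` is real if the canonical copy of `ℝ`
(via constant functions) is all of `B₁(X)/M`. -/
def RealIdeal (M : Ideal (B1 X)) : Prop :=
  Function.Surjective (fun r : ℝ => Ideal.Quotient.mk M (bconst X r))

/-- An `F_σ` subset: a countable union of closed sets. -/
def IsFSigma {X : Type*} [TopologicalSpace X] (s : Set X) : Prop :=
  ∃ F : ℕ → Set X, (∀ n, IsClosed (F n)) ∧ s = ⋃ n, F n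
/-- If `f` is Baire one and never vanishes, then `1/f` is Baire one. -/
lemma b1_inv_mem {X : Type*} [TopologicalSpace X] (f : B1 X)
    (hf : ∀ x, (f : X → ℝ) x ≠ 0) : (fun x => ((f : X → ℝ) x)⁻¹) ∈ B1 X := by
  obtain ⟨F, hF⟩ := f.2
  refine ⟨fun n => ⟨fun x => F n x / ((F n x) ^ 2 + 1 / (n + 1)), ?_⟩, fun x => ?_⟩
  · refine (F n).continuous.div (((F n).continuous.pow 2).add continuous_const) ?_
    intro x
    have h1 : (0 : ℝ) < 1 / (n + 1) := by positivity
    have h2 : (0 : ℝ) ≤ (F n x) ^ 2 := sq_nonneg _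
    positivity
  · have hc : (f : X → ℝ) x ≠ 0 := hf x
    have hden : Tendsto (fun n : ℕ => (F n x) ^ 2 + 1 / ((n : ℝ) + 1)) atTop
        (𝓝 ((f : X → ℝ) x ^ 2)) := by
      have := ((hF x).pow 2).add tendsto_one_div_add_atTop_nhds_zero_nat
      simpa using this
    have := (hF x).div hden (by positivity)
    convert this using 2
    · rfl
    · simp only [pow_two]; field_simp

/-- If `M` is a maximal ideal of `B₁(X)` then `Z_B[M]` is a `Z_B`-ultrafilter. -/
theorem zbi_isZBUltrafilter {X : Type*} [TopologicalSpace X]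
    (M : Ideal (B1 X)) (hM : M.IsMaximal) : IsZBUltrafilter (zbi M) := by
  have hfilter : IsZBFilter (zbi M) := by
    refine ⟨⟨Set.univ, 0, M.zero_mem, ?_⟩, ?_, ?_, ?_, ?_⟩
    · ext x; simp [zset]
    · rintro Z ⟨f, _, rfl⟩; exact ⟨f, rfl⟩
    · rintro ⟨f, hfM, hZ⟩
      have hne : ∀ x, (f : X → ℝ) x ≠ 0 := by
        intro x hx
        have : x ∈ zset f := hx
        rw [hZ] at this
        exact this
      set g : B1 X := ⟨fun x => ((f : X → ℝ) x)⁻¹, b1_inv_mem f hne⟩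
      have h1 : f * g = 1 := by
        apply Subtype.ext
        funext x
        exact mul_inv_cancel₀ (hne x)
      exact hM.ne_top (Ideal.eq_top_iff_one M |>.mpr (h1 ▸ M.mul_mem_right g hfM))
    · rintro Z₁ ⟨f, hf, rfl⟩ Z₂ ⟨g, hg, rfl⟩
      refine ⟨f * f + g * g, M.add_mem (M.mul_mem_left f hf) (M.mul_mem_left g hg), ?_⟩
      ext x
      have : ((f * f + g * g : B1 X) : X → ℝ) x
          = (f : X → ℝ) x * (f : X → ℝ) x + (g : X → ℝ) x * (g : X → ℝ) x := rfl
      simp only [zset, Set.mem_setOf_eq, Set.mem_inter_iff, this]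
      constructor
      · intro h
        have h1 := (add_eq_zero_iff_of_nonneg (mul_self_nonneg _) (mul_self_nonneg _)).mp h
        exact ⟨mul_self_eq_zero.mp h1.1, mul_self_eq_zero.mp h1.2⟩
      · rintro ⟨h1, h2⟩; rw [h1, h2]; ring
    · rintro Z ⟨f, hf, rfl⟩ Z' ⟨g, rfl⟩ hsub
      refine ⟨g * f, M.mul_mem_left g hf, ?_⟩
      ext x
      have : ((g * f : B1 X) : X → ℝ) x = (g : X → ℝ) x * (f : X → ℝ) x := rfl
      simp only [zset, Set.mem_setOf_eq, this, mul_eq_zero]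
      constructor
      · rintro (h | h)
        · exact h
        · exact hsub h
      · exact Or.inl
  refine ⟨hfilter, fun F hF hsub => ?_⟩
  apply Set.Subset.antisymm _ hsub
  intro Z hZF
  obtain ⟨g, rfl⟩ := hF.2.1 hZF
  by_contra hgM'
  have hg : g ∉ M := fun h => hgM' ⟨g, h, rfl⟩
  have htop : M ⊔ Ideal.span {g} = ⊤ := by
    refine hM.1.2 _ (lt_of_le_of_ne le_sup_left fun h => hg ?_)
    exact h ▸ le_sup_right (a := M) (Ideal.mem_span_singleton_self g)
  have h1 : (1 : B1 X) ∈ M ⊔ Ideal.span {g} := htop ▸ Submodule.mem_top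
  obtain ⟨m, hm, y, hy, hmy⟩ := Submodule.mem_sup.mp h1
  obtain ⟨h, rfl⟩ := Ideal.mem_span_singleton'.mp hy
  have hempty : zset m ∩ zset g = ∅ := by
    ext x
    simp only [Set.mem_inter_iff, Set.mem_empty_iff_false, iff_false, zset,
      Set.mem_setOf_eq, not_and]
    intro hmx hgx
    have := congrArg (fun f : B1 X => (f : X → ℝ) x) hmy
    have heval : (m : X → ℝ) x + (h : X → ℝ) x * (g : X → ℝ) x = 1 := this
    rw [hmx, hgx] at heval
    norm_num at heval
  have hmem : (∅ : Set X) ∈ F := by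
    rw [← hempty]
    exact hF.2.2.2.1 _ (hsub ⟨m, hm, rfl⟩) _ hZF
  exact hF.2.2.1 hmem
end

section
/- If 𝒰 is a Z_B-ultrafilter on X, then Z_B⁻¹[𝒰] = {f ∈ B₁(X) : Z(f) ∈ 𝒰} is a maximal ideal in B₁(X). -/
open Filter Topology

variable {X : Type*} [TopologicalSpace X]

-- Auxiliary lemmas

theorem binv_mem (f : B1 X) (hf : ∀ x, (f : X → ℝ) x ≠ 0) :
    (fun x => ((f : X → ℝ) x)⁻¹) ∈ B1 X := by
  obtain ⟨F, hF⟩ := f.2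
  refine ⟨fun n => ⟨fun x => F n x / max ((F n x) ^ 2) (1 / (n + 1 : ℝ) ^ 2), ?_⟩, ?_⟩
  · exact (F n).continuous.div (((F n).continuous.pow 2).max continuous_const)
      (fun x => ne_of_gt (lt_max_of_lt_right (by positivity)))
  · intro x
    have h1 : Tendsto (fun n : ℕ => (1 : ℝ) / (n + 1) ^ 2) atTop (𝓝 0) := by
      have := (tendsto_one_div_add_atTop_nhds_zero_nat (𝕜 := ℝ)).pow 2
      simpa [div_pow] using this
    have h2 : Tendsto (fun n => max ((F n x) ^ 2) (1 / (n + 1 : ℝ) ^ 2)) atTop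
        (𝓝 (((f : X → ℝ) x) ^ 2)) := by
      have := ((hF x).pow 2).max h1
      simpa [max_eq_left (sq_nonneg _)] using this
    have h3 := (hF x).div h2 (pow_ne_zero 2 (hf x))
    have h4 : (f : X → ℝ) x / ((f : X → ℝ) x) ^ 2 = ((f : X → ℝ) x)⁻¹ := by
      rw [sq]
      field_simp
    simpa [h4, Pi.div_def] using h3

theorem zset_sq_add_sq (f g : B1 X) : zset (f * f + g * g) = zset f ∩ zset g := by
  ext x
  have hco : ((f * f + g * g : B1 X) : X → ℝ) x
      = (f : X → ℝ) x * (f : X → ℝ) x + (g : X → ℝ) x * (g : X → ℝ) x := rfl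
  simp only [zset, Set.mem_setOf_eq, Set.mem_inter_iff, hco]
  constructor
  · intro h
    have h1 : (f : X → ℝ) x * (f : X → ℝ) x = 0 ∧ (g : X → ℝ) x * (g : X → ℝ) x = 0 :=
      (add_eq_zero_iff_of_nonneg (mul_self_nonneg _) (mul_self_nonneg _)).mp h
    exact ⟨mul_self_eq_zero.mp h1.1, mul_self_eq_zero.mp h1.2⟩
  · rintro ⟨h1, h2⟩
    rw [h1, h2]; ring

theorem mem_of_meets (U : Set (Set X)) (hU : IsZBUltrafilter U) (Z' : Set X)
    (hZ' : Z' ∈ zsets X) (h : ∀ Z ∈ U, (Z' ∩ Z).Nonempty) : Z' ∈ U := by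
  set F : Set (Set X) := {W | W ∈ zsets X ∧ ∃ Z ∈ U, Z' ∩ Z ⊆ W} with hFdef
  obtain ⟨Z₀, hZ₀⟩ := hU.1.1
  have hZ'F : Z' ∈ F := ⟨hZ', Z₀, hZ₀, Set.inter_subset_left⟩
  have hUF : U ⊆ F := fun Z hZ => ⟨hU.1.2.1 hZ, Z, hZ, Set.inter_subset_right⟩
  have hFilt : IsZBFilter F := by
    refine ⟨⟨Z', hZ'F⟩, fun W hW => hW.1, ?_, ?_, ?_⟩
    · rintro ⟨-, Z, hZ, hsub⟩
      obtain ⟨x, hx⟩ := h Z hZ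
      exact hsub hx
    · rintro W₁ ⟨⟨f₁, hf₁⟩, Z₁, hZ₁, hs₁⟩ W₂ ⟨⟨f₂, hf₂⟩, Z₂, hZ₂, hs₂⟩
      refine ⟨⟨f₁ * f₁ + f₂ * f₂, by rw [zset_sq_add_sq, hf₁, hf₂]⟩,
        Z₁ ∩ Z₂, hU.1.2.2.2.1 Z₁ hZ₁ Z₂ hZ₂, ?_⟩
      intro x hx
      exact ⟨hs₁ ⟨hx.1, hx.2.1⟩, hs₂ ⟨hx.1, hx.2.2⟩⟩
    · rintro W ⟨-, Z, hZ, hsub⟩ W' hW' hWW'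
      exact ⟨hW', Z, hZ, hsub.trans hWW'⟩
  have := hU.2 F hFilt hUF
  rw [← this]
  exact hZ'F

/-- If `𝒰` is a `Z_B`-ultrafilter on `X` then `Z_B⁻¹[𝒰]` is a maximal ideal. -/
theorem zbinv_isMaximal {X : Type*} [TopologicalSpace X]
    (U : Set (Set X)) (hU : IsZBUltrafilter U) :
    ∃ M : Ideal (B1 X), M.IsMaximal ∧ (M : Set (B1 X)) = {f : B1 X | zset f ∈ U} := by
  have hups := hU.1.2.2.2.2
  have hzero : zset (0 : B1 X) = Set.univ := by
    ext x; simp [zset]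
  have huniv : Set.univ ∈ U := by
    obtain ⟨Z₀, hZ₀⟩ := hU.1.1
    exact hups Z₀ hZ₀ _ ⟨0, hzero⟩ (Set.subset_univ _)
  refine ⟨{ carrier := {f : B1 X | zset f ∈ U}
            zero_mem' := by simpa [hzero] using huniv
            add_mem' := by
              intro f g hf hg
              refine hups _ (hU.1.2.2.2.1 _ hf _ hg) _ ⟨f + g, rfl⟩ ?_
              rintro x ⟨h1, h2⟩
              show ((f + g : B1 X) : X → ℝ) x = 0
              have : ((f + g : B1 X) : X → ℝ) x = (f : X → ℝ) x + (g : X → ℝ) x := rfl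
              rw [this, h1, h2, add_zero]
            smul_mem' := by
              intro c f hf
              refine hups _ hf _ ⟨c * f, rfl⟩ ?_
              intro x hx
              show ((c * f : B1 X) : X → ℝ) x = 0
              have : ((c * f : B1 X) : X → ℝ) x = (c : X → ℝ) x * (f : X → ℝ) x := rfl
              rw [this, (show (f : X → ℝ) x = 0 from hx), mul_zero] }, ?_, rfl⟩
  rw [Ideal.isMaximal_iff]
  constructor
  · show zset (1 : B1 X) ∉ U
    have : zset (1 : B1 X) = ∅ := by ext x; simp [zset]
    rw [this]
    exact hU.1.2.2.1
  · intro J f hMJ hf hfJ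
    have hf' : zset f ∉ U := hf
    -- find Z ∈ U disjoint from zset f
    have : ¬ ∀ Z ∈ U, (zset f ∩ Z).Nonempty := by
      intro hmeets
      exact hf' (mem_of_meets U hU _ ⟨f, rfl⟩ hmeets)
    push_neg at this
    obtain ⟨Z, hZU, hZdisj⟩ := this
    obtain ⟨g, hg⟩ : Z ∈ zsets X := hU.1.2.1 hZU
    have hgM : zset g ∈ U := by rw [hg]; exact hZU
    set h : B1 X := f * f + g * g with hh
    have hhJ : h ∈ J := J.add_mem (J.mul_mem_left f hfJ) (J.mul_mem_left g (hMJ hgM))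
    have hne : ∀ x, (h : X → ℝ) x ≠ 0 := by
      intro x hx
      have : x ∈ zset (f * f + g * g) := hx
      rw [zset_sq_add_sq, hg] at this
      have : x ∈ (zset f ∩ Z) := this
      rw [hZdisj] at this
      exact this
    set k : B1 X := ⟨fun x => ((h : X → ℝ) x)⁻¹, binv_mem h hne⟩ with hk
    have hinv : h * k = 1 := by
      apply Subtype.ext
      funext x
      show (h : X → ℝ) x * ((h : X → ℝ) x)⁻¹ = 1
      exact mul_inv_cancel₀ (hne x)
    have : h * k ∈ J := J.mul_mem_right k hhJ
    rwa [hinv] at this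
end

section
/- For a maximal ideal M of B₁(X) and f ∈ B₁(X), the following are equivalent: (1) |M(f)| is an infinitely large element of the totally ordered field B₁(X)/M (i.e., |M(f)| > M(n) for every natural number n, where n denotes the constant function); (2) f is unbounded on every zero set belonging to Z_B[M]; (3) for every n ∈ ℕ, the set Z_n = {x ∈ X : |f(x)| ≥ n} belongs to Z_B[M]. -/
open Filter Topology

variable {X : Type*} [TopologicalSpace X]

-- auxiliary lemmas to be inserted before theorem
section Aux
variable {X : Type*} [TopologicalSpace X]

lemma B1.coe_natCast (n : ℕ) (x : X) : ((n : B1 X) : X → ℝ) x = n := by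
  have : ((n : B1 X) : X → ℝ) = ((n : ℕ) : X → ℝ) := by
    exact map_natCast (B1 X).subtype n
  simp [this]

lemma B1.coe_babs (f : B1 X) (x : X) : ((babs f : B1 X) : X → ℝ) x = |(f : X → ℝ) x| := rfl

lemma b1_isUnit_of_ne_zero (u : B1 X) (hu : ∀ x, (u : X → ℝ) x ≠ 0) : IsUnit u := by
  obtain ⟨F, hF⟩ := u.2
  have hinv : (fun x => ((u : X → ℝ) x)⁻¹) ∈ B1 X := by
    refine ⟨fun n => ⟨fun x => F n x / ((F n x) ^ 2 + 1 / (n + 1)), ?_⟩, fun x => ?_⟩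
    · refine (F n).continuous.div (((F n).continuous.pow 2).add continuous_const) ?_
      intro x
      positivity
    · have h1 : Filter.Tendsto (fun n : ℕ => (1 : ℝ) / (n + 1)) Filter.atTop (nhds 0) :=
        tendsto_one_div_add_atTop_nhds_zero_nat
      have h2 : Filter.Tendsto (fun n => F n x / ((F n x) ^ 2 + 1 / (n + 1)))
          Filter.atTop (nhds ((u : X → ℝ) x / ((u : X → ℝ) x ^ 2 + 0))) :=
        (hF x).div (((hF x).pow 2).add h1) (by
          have := hu x; intro h; apply this; nlinarith [sq_nonneg ((u : X → ℝ) x)])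
      have heq : (u : X → ℝ) x / ((u : X → ℝ) x ^ 2 + 0) = ((u : X → ℝ) x)⁻¹ := by
        rw [add_zero, sq]
        field_simp
      rwa [heq] at h2
  refine IsUnit.of_mul_eq_one (a := u) ⟨_, hinv⟩ ?_
  ext x
  exact mul_inv_cancel₀ (hu x)

lemma no_disjoint_zeros (M : Ideal (B1 X)) (hM : M ≠ ⊤) {a b : B1 X}
    (ha : a ∈ M) (hb : b ∈ M)
    (h : ∀ x, (a : X → ℝ) x = 0 → (b : X → ℝ) x ≠ 0) : False := by
  have hmem : a * a + b * b ∈ M :=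
    add_mem (Ideal.mul_mem_left M a ha) (Ideal.mul_mem_left M b hb)
  have hne : ∀ x, ((a * a + b * b : B1 X) : X → ℝ) x ≠ 0 := by
    intro x hx
    have hx' : (a : X → ℝ) x * (a : X → ℝ) x + (b : X → ℝ) x * (b : X → ℝ) x = 0 := hx
    by_cases h0 : (a : X → ℝ) x = 0
    · have := h x h0
      apply this
      nlinarith [mul_self_nonneg ((a : X → ℝ) x), mul_self_nonneg ((b : X → ℝ) x)]
    · apply h0
      nlinarith [mul_self_nonneg ((a : X → ℝ) x), mul_self_nonneg ((b : X → ℝ) x)]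
  exact hM (Ideal.eq_top_of_isUnit_mem M hmem (b1_isUnit_of_ne_zero _ hne))

lemma bposPart_mem (h : B1 X) : (fun x => max ((h : X → ℝ) x) 0) ∈ B1 X := by
  obtain ⟨F, hF⟩ := h.2
  exact ⟨fun n => ⟨fun x => max (F n x) 0, (F n).continuous.max continuous_const⟩,
    fun x => (hF x).max tendsto_const_nhds⟩

/-- The positive part of a Baire one function. -/
def bposPart (h : B1 X) : B1 X := ⟨_, bposPart_mem h⟩

end Aux

/-- For a maximal ideal `M` of `B₁(X)` and `f ∈ B₁(X)` the following are
equivalent: `|M(f)|` is infinitely large in `B₁(X)/M` (i.e. `M(|f|) > M(n)` for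
every `n ∈ ℕ`); `f` is unbounded on every member of `Z_B[M]`; for every
`n ∈ ℕ`, `Z_n = {x : |f(x)| ≥ n}` belongs to `Z_B[M]`. -/
theorem infinitely_large_tfae {X : Type*} [TopologicalSpace X]
    (M : Ideal (B1 X)) (hM : M.IsMaximal) (f : B1 X) :
    [∀ n : ℕ, QPos M (Ideal.Quotient.mk M (babs f - (n : B1 X))),
     ∀ Z ∈ zbi M, ¬ ∃ B : ℝ, ∀ x ∈ Z, |(f : X → ℝ) x| ≤ B,
     ∀ n : ℕ, {x : X | (n : ℝ) ≤ |(f : X → ℝ) x|} ∈ zbi M].TFAE := by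
  have hne_top : M ≠ ⊤ := hM.ne_top
  tfae_have 1 → 2 := by
    intro h1 Z hZ hbdd
    obtain ⟨g, hgM, hgz⟩ := hZ
    obtain ⟨B, hB⟩ := hbdd
    set n : ℕ := ⌈B⌉₊ + 1 with hn
    have hBn : B < (n : ℝ) := by
      calc B ≤ (⌈B⌉₊ : ℝ) := Nat.le_ceil B
        _ < (n : ℝ) := by exact_mod_cast Nat.lt_succ_self _
    obtain ⟨⟨k, hk0, hkeq⟩, -⟩ := h1 n
    have hd : k - (babs f - (n : B1 X)) ∈ M := by
      rwa [Ideal.Quotient.eq] at hkeq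
    refine no_disjoint_zeros M hne_top hd hgM ?_
    intro x hx hgx
    have hxZ : x ∈ Z := by rw [← hgz]; exact hgx
    have hfB := hB x hxZ
    have hval : ((k - (babs f - (n : B1 X)) : B1 X) : X → ℝ) x
        = (k : X → ℝ) x - (|(f : X → ℝ) x| - (n : ℝ)) := by
      simp only [AddSubgroupClass.coe_sub, Pi.sub_apply, B1.coe_natCast]
      rfl
    rw [hval] at hx
    have := hk0 x
    linarith
  tfae_have 2 → 3 := by
    intro h2 n
    set e : B1 X := bposPart ((n : B1 X) - babs f) with he
    have heval : ∀ x, (e : X → ℝ) x = max ((n : ℝ) - |(f : X → ℝ) x|) 0 := by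
      intro x
      show max ((((n : B1 X) - babs f : B1 X) : X → ℝ) x) 0 = _
      simp only [AddSubgroupClass.coe_sub, Pi.sub_apply, B1.coe_natCast]
      rfl
    have heM : e ∈ M := by
      by_contra hcon
      obtain ⟨a, m, hmM, hame⟩ := hM.exists_inv hcon
      have hub := h2 (zset m) ⟨m, hmM, rfl⟩
      push_neg at hub
      obtain ⟨x, hxm, hxf⟩ := hub (n : ℝ)
      have hm0 : (m : X → ℝ) x = 0 := hxm
      have hex : (e : X → ℝ) x = 0 := by
        rw [heval]
        exact max_eq_right (by linarith)
      have hval := congrArg (fun z : B1 X => (z : X → ℝ) x) hame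
      simp only [Subring.coe_add, Subring.coe_mul, Pi.add_apply, Pi.mul_apply,
        Subring.coe_one, Pi.one_apply, hex, hm0, mul_zero, add_zero] at hval
      exact zero_ne_one hval
    refine ⟨e, heM, ?_⟩
    ext x
    simp only [zset, Set.mem_setOf_eq, heval, max_eq_right_iff, sub_nonpos]
  tfae_have 3 → 1 := by
    intro h3 n
    obtain ⟨g, hgM, hgz⟩ := h3 (n + 1)
    have hgz' : ∀ x, (g : X → ℝ) x = 0 ↔ ((n : ℝ) + 1) ≤ |(f : X → ℝ) x| := by
      intro x
      have h := Set.ext_iff.mp hgz x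
      simp only [zset, Set.mem_setOf_eq] at h
      rw [h]
      push_cast
      rfl
    set k : B1 X := bposPart (babs f - (n : B1 X)) with hk
    have hkval : ∀ x, (k : X → ℝ) x = max (|(f : X → ℝ) x| - (n : ℝ)) 0 := by
      intro x
      show max (((babs f - (n : B1 X) : B1 X) : X → ℝ) x) 0 = _
      simp only [AddSubgroupClass.coe_sub, Pi.sub_apply, B1.coe_natCast]
      rfl
    constructor
    · refine ⟨k, fun x => by rw [hkval]; exact le_max_right _ _, ?_⟩
      rw [Ideal.Quotient.eq]
      by_contra hcon
      obtain ⟨a, m, hmM, hame⟩ := hM.exists_inv hcon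
      refine no_disjoint_zeros M hne_top hmM hgM ?_
      intro x hmx hgx
      have hf1 : (n : ℝ) + 1 ≤ |(f : X → ℝ) x| := (hgz' x).mp hgx
      have hdx : ((k - (babs f - (n : B1 X)) : B1 X) : X → ℝ) x = 0 := by
        simp only [AddSubgroupClass.coe_sub, Pi.sub_apply, B1.coe_natCast, B1.coe_babs, hkval]
        rw [max_eq_left (by linarith : (0:ℝ) ≤ |(f : X → ℝ) x| - (n : ℝ))]
        ring
      have hval := congrArg (fun z : B1 X => (z : X → ℝ) x) hame
      simp only [Subring.coe_add, Subring.coe_mul, Pi.add_apply, Pi.mul_apply,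
        Subring.coe_one, Pi.one_apply, hdx, hmx, mul_zero, add_zero] at hval
      exact zero_ne_one hval
    · intro h0
      rw [Ideal.Quotient.eq_zero_iff_mem] at h0
      refine no_disjoint_zeros M hne_top h0 hgM ?_
      intro x hx hgx
      have hf1 : (n : ℝ) + 1 ≤ |(f : X → ℝ) x| := (hgz' x).mp hgx
      have hx' : |(f : X → ℝ) x| - (n : ℝ) = 0 := by
        have : ((babs f - (n : B1 X) : B1 X) : X → ℝ) x
            = |(f : X → ℝ) x| - (n : ℝ) := by
          simp only [AddSubgroupClass.coe_sub, Pi.sub_apply, B1.coe_natCast]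
          rfl
        rw [← this]
        exact hx
      linarith
  tfae_finish
end
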